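/- Let α > 0 and let Z_α be Poisson with parameter α. For any A ⊆ ℕ, let h : ℕ → ℝ be the solution with h(0) = 0 of the Stein equation α·h(i+1) - i·h(i) = 1_A(i) - P(Z_α ∈ A) for all i ∈ ℕ. Then sup_i |h(i+1) - h(i)| ≤ min(1, 1/α). -/

import Mathlib

open Real

/-- The Poisson pmf with real parameter `r`. -/
noncomputable def poissonPmf (r : ℝ) (n : ℕ) : ℝ := Real.exp (-r) * r ^ n / n.factorial


noncomputable def Ppart (α : ℝ) (j : ℕ) : ℝ := ∑ i ∈ Finset.range (j+1), α ^ i / i.factorial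
noncomputable def Qt (α : ℝ) (j : ℕ) : ℝ := ∑' k : ℕ, α ^ (j+1+k) / (j+1+k).factorial

lemma sumPow (α : ℝ) (n : ℕ) : Summable (fun k : ℕ => α ^ (n + k) / (n + k).factorial) := by
  simpa [add_comm] using (summable_nat_add_iff n).2 (Real.summable_pow_div_factorial α)

lemma exp_tsum (α : ℝ) : Real.exp α = ∑' n : ℕ, α ^ n / n.factorial := by
  rw [Real.exp_eq_exp_ℝ, NormedSpace.exp_eq_tsum_div]

lemma exp_split (α : ℝ) (j : ℕ) : Real.exp α = Ppart α j + Qt α j := by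
  have := Summable.sum_add_tsum_nat_add (f := fun n : ℕ => α ^ n / n.factorial) (j+1)
    (Real.summable_pow_div_factorial α)
  rw [exp_tsum α, ← this, Ppart, Qt]
  congr 1
  exact tsum_congr fun k => by rw [add_comm k (j+1)]

lemma stepfact (α : ℝ) (n : ℕ) :
    α * (α ^ n / n.factorial) = (n+1 : ℝ) * (α ^ (n+1) / (n+1).factorial) := by
  rw [Nat.factorial_succ]
  have h1 : (n.factorial : ℝ) ≠ 0 := Nat.cast_ne_zero.2 n.factorial_ne_zero
  have h2 : (n : ℝ) + 1 ≠ 0 := by positivity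
  push_cast
  field_simp
  ring

lemma lemP (α : ℝ) (hα : 0 ≤ α) (j : ℕ) :
    α * Ppart α j ≤ (j+1 : ℝ) * (Ppart α (j+1) - 1) := by
  have h1 : Ppart α (j+1) - 1 = ∑ i ∈ Finset.range (j+1), α ^ (i+1) / (i+1).factorial := by
    rw [Ppart, Finset.sum_range_succ']
    simp
  rw [h1, Ppart, Finset.mul_sum, Finset.mul_sum]
  apply Finset.sum_le_sum
  intro i hi
  rw [stepfact]
  have hi' : (i : ℝ) + 1 ≤ (j : ℝ) + 1 := by
    have := Finset.mem_range.1 hi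
    have : (i:ℝ) ≤ j := by exact_mod_cast Nat.lt_succ_iff.1 this
    linarith
  have hnn : (0:ℝ) ≤ α ^ (i+1) / (i+1).factorial := by positivity
  exact mul_le_mul_of_nonneg_right hi' hnn

lemma lemP' (α : ℝ) (hα : 0 ≤ α) (j : ℕ) :
    α * Ppart α j ≤ (j+1 : ℝ) * Ppart α (j+1) := by
  have := lemP α hα j
  nlinarith [this]

lemma lemQ (α : ℝ) (hα : 0 ≤ α) (j : ℕ) :
    (j+1 : ℝ) * Qt α (j+1) ≤ α * Qt α j := by
  rw [Qt, Qt, ← tsum_mul_left, ← tsum_mul_left]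
  refine Summable.tsum_le_tsum (fun k => ?_) ((sumPow α (j+1+1)).mul_left _) ((sumPow α (j+1)).mul_left _)
  rw [stepfact α (j+1+k)]
  have he : j+1+1+k = (j+1+k)+1 := by omega
  rw [he]
  have hnn : (0:ℝ) ≤ α ^ (j+1+k+1) / (j+1+k+1).factorial := by positivity
  refine mul_le_mul_of_nonneg_right ?_ hnn
  push_cast
  linarith [Nat.cast_nonneg (α := ℝ) k]

lemma Qt_nonneg (α : ℝ) (hα : 0 ≤ α) (j : ℕ) : 0 ≤ Qt α j :=
  tsum_nonneg fun k => by positivity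

lemma Ppart_nonneg (α : ℝ) (hα : 0 ≤ α) (j : ℕ) : 0 ≤ Ppart α j :=
  Finset.sum_nonneg fun i _ => by positivity

noncomputable def Tpart (α : ℝ) (A : Set ℕ) (j : ℕ) : ℝ :=
  ∑ i ∈ Finset.range (j+1), Set.indicator A (fun _ => (1:ℝ)) i * (α ^ i / i.factorial)

lemma hform (α : ℝ) (hα : 0 < α) (A : Set ℕ) (h : ℕ → ℝ) (h0 : h 0 = 0) (c : ℝ)
    (hstein : ∀ i : ℕ, α * h (i+1) - i * h i = Set.indicator A (fun _ => (1:ℝ)) i - c) :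
    ∀ j : ℕ, h (j+1) = (j.factorial : ℝ) * (Tpart α A j - c * Ppart α j) / α ^ (j+1) := by
  intro j
  induction j with
  | zero =>
    have e := hstein 0
    rw [h0] at e
    simp only [Nat.cast_zero, zero_mul, mul_zero, sub_zero, zero_add] at e
    have hα' : α ≠ 0 := ne_of_gt hα
    rw [Tpart, Ppart]
    simp only [zero_add, Finset.range_one, Finset.sum_singleton, pow_zero, Nat.factorial_zero,
      Nat.cast_one]
    field_simp
    linarith [e]
  | succ j ih =>
    have e := hstein (j+1)
    rw [ih] at e
    have hα' : α ≠ 0 := ne_of_gt hα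
    have hαp : (α : ℝ) ^ (j+1) ≠ 0 := pow_ne_zero _ hα'
    have hf : ((j+1).factorial : ℝ) ≠ 0 := Nat.cast_ne_zero.2 (j+1).factorial_ne_zero
    have hf0 : (j.factorial : ℝ) ≠ 0 := Nat.cast_ne_zero.2 j.factorial_ne_zero
    have hT : Tpart α A (j+1) = Tpart α A j
        + Set.indicator A (fun _ => (1:ℝ)) (j+1) * (α ^ (j+1) / (j+1).factorial) := by
      rw [Tpart, Tpart, Finset.sum_range_succ]
    have hP : Ppart α (j+1) = Ppart α j + α ^ (j+1) / (j+1).factorial := by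
      rw [Ppart, Ppart, Finset.sum_range_succ]
    rw [hT, hP]
    have hfs : ((j+1).factorial : ℝ) = (j+1) * j.factorial := by
      rw [Nat.factorial_succ]; push_cast; ring
    -- from e : α * h (j+2) - (j+1) * (formula) = ind (j+1) - c
    have e2 : α * h (j+1+1) =
        (j+1 : ℝ) * ((j.factorial : ℝ) * (Tpart α A j - c * Ppart α j) / α ^ (j+1))
        + (Set.indicator A (fun _ => (1:ℝ)) (j+1) - c) := by
      push_cast at e ⊢
      linarith [e]
    have : h (j+1+1) = ((j+1 : ℝ) * ((j.factorial : ℝ) * (Tpart α A j - c * Ppart α j) / α ^ (j+1))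
        + (Set.indicator A (fun _ => (1:ℝ)) (j+1) - c)) / α := by
      field_simp at e2 ⊢
      linarith [e2]
    rw [this, hfs]
    field_simp
    ring

lemma master (E Einv c D T0 aa R P0 P1 Q0 Q1 u0 u1 amax : ℝ)
    (hEE : Einv * E = 1) (hE1 : E = P1 + Q1) (hE0 : E = P0 + Q0)
    (hD : D = u1 * ((T0 + aa) - c * P1) - u0 * (T0 - c * P0))
    (hcv : c = Einv * ((T0 + aa) + R))
    (hβ : u0 * P0 ≤ u1 * P1) (hγ : u1 * Q1 ≤ u0 * Q0)
    (hT0 : 0 ≤ T0) (hR : 0 ≤ R) (haa : 0 ≤ aa) (haa' : aa ≤ amax)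
    (hM : 0 ≤ u1 * Q1 + u0 * P0) (hEinv : 0 < Einv) :
    D ≤ Einv * (amax * (u1 * Q1 + u0 * P0)) := by
  have hid : D = Einv * ((u1*Q1 - u0*Q0) * T0 + aa * (u1*Q1 + u0*P0) - (u1*P1 - u0*P0) * R) := by
    have hQ1 : Q1 = E - P1 := by linarith
    have hQ0 : Q0 = E - P0 := by linarith
    rw [hD, hcv, hQ1, hQ0]
    linear_combination (-((u1 - u0) * T0 + u1 * aa)) * hEE
  rw [hid]
  have b1 : (u1*Q1 - u0*Q0) * T0 ≤ 0 := mul_nonpos_of_nonpos_of_nonneg (by linarith) hT0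
  have b2 : aa * (u1*Q1 + u0*P0) ≤ amax * (u1*Q1 + u0*P0) := mul_le_mul_of_nonneg_right haa' hM
  have b3 : 0 ≤ (u1*P1 - u0*P0) * R := mul_nonneg (by linarith) hR
  have hx : (u1*Q1 - u0*Q0) * T0 + aa*(u1*Q1+u0*P0) - (u1*P1-u0*P0)*R
      ≤ amax*(u1*Q1+u0*P0) := by linarith
  exact mul_le_mul_of_nonneg_left hx hEinv.le

noncomputable def gfun (α : ℝ) (A : Set ℕ) (n : ℕ) : ℝ :=
  Set.indicator A (fun _ => (1:ℝ)) n * (α ^ n / n.factorial)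

lemma ind_nonneg (A : Set ℕ) (n : ℕ) : 0 ≤ Set.indicator A (fun _ => (1:ℝ)) n :=
  Set.indicator_nonneg (fun _ _ => one_pos.le) n

lemma ind_le_one (A : Set ℕ) (n : ℕ) : Set.indicator A (fun _ => (1:ℝ)) n ≤ 1 := by
  by_cases hn : n ∈ A <;> simp [hn]

lemma gfun_nonneg (α : ℝ) (hα : 0 ≤ α) (A : Set ℕ) (n : ℕ) : 0 ≤ gfun α A n :=
  mul_nonneg (ind_nonneg A n) (by positivity)

lemma gfun_le (α : ℝ) (hα : 0 ≤ α) (A : Set ℕ) (n : ℕ) : gfun α A n ≤ α ^ n / n.factorial := by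
  have h := mul_le_mul_of_nonneg_right (ind_le_one A n)
    (show (0:ℝ) ≤ α ^ n / n.factorial by positivity)
  simpa [gfun] using h

lemma gfun_summable (α : ℝ) (hα : 0 ≤ α) (A : Set ℕ) : Summable (gfun α A) :=
  Summable.of_nonneg_of_le (gfun_nonneg α hα A) (gfun_le α hα A)
    (Real.summable_pow_div_factorial α)

lemma Tpart_eq (α : ℝ) (A : Set ℕ) (j : ℕ) :
    Tpart α A j = ∑ i ∈ Finset.range (j+1), gfun α A i := rfl

lemma cval (α : ℝ) (hα : 0 ≤ α) (A : Set ℕ) (m : ℕ) :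
    (∑' n : ℕ, Set.indicator A (poissonPmf α) n)
      = Real.exp (-α) * ((∑ i ∈ Finset.range m, gfun α A i) + ∑' k : ℕ, gfun α A (k + m)) := by
  have hpt : ∀ n, Set.indicator A (poissonPmf α) n = Real.exp (-α) * gfun α A n := by
    intro n
    by_cases hn : n ∈ A
    · simp only [Set.indicator_of_mem hn, gfun, poissonPmf]
      ring
    · simp [Set.indicator_of_notMem hn, gfun]
  rw [tsum_congr hpt, tsum_mul_left, Summable.sum_add_tsum_nat_add m (gfun_summable α hα A)]

lemma stein_one_sided (α : ℝ) (hα : 0 < α) (A : Set ℕ) (h : ℕ → ℝ) (h0 : h 0 = 0)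
    (hstein : ∀ i : ℕ, α * h (i + 1) - i * h i =
      Set.indicator A (fun _ => (1 : ℝ)) i - ∑' n : ℕ, Set.indicator A (poissonPmf α) n) :
    ∀ i : ℕ, h (i + 1) - h i ≤ min 1 (1 / α) := by
  have hα0 : (0:ℝ) ≤ α := hα.le
  have hα' : α ≠ 0 := ne_of_gt hα
  have hE'pos : (0:ℝ) < Real.exp (-α) := Real.exp_pos _
  have hE'le1 : Real.exp (-α) ≤ 1 := Real.exp_le_one_iff.2 (by linarith)
  have hEE : Real.exp (-α) * Real.exp α = 1 := by rw [← Real.exp_add]; simp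
  have hGb : (1 - Real.exp (-α)) / α ≤ min 1 (1/α) := by
    refine le_min ?_ ?_
    · rw [div_le_one hα]; linarith [Real.add_one_le_exp (-α)]
    · exact (div_le_div_iff_of_pos_right hα).2 (by linarith)
  have hfe := hform α hα A h h0 _ hstein
  intro i
  rcases i with _ | j
  · -- i = 0
    have e1 := hfe 0
    have hT0 : Tpart α A 0 = Set.indicator A (fun _ => (1:ℝ)) 0 := by
      simp [Tpart]
    have hP0 : Ppart α 0 = 1 := by simp [Ppart]
    rw [hT0, hP0] at e1
    have hcge : Real.exp (-α) * Set.indicator A (fun _ => (1:ℝ)) 0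
        ≤ ∑' n : ℕ, Set.indicator A (poissonPmf α) n := by
      rw [cval α hα0 A 1]
      have h1 : (∑ i ∈ Finset.range 1, gfun α A i) = Set.indicator A (fun _ => (1:ℝ)) 0 := by
        simp [gfun]
      rw [h1]
      have h2 : 0 ≤ ∑' k : ℕ, gfun α A (k+1) := tsum_nonneg (fun k => gfun_nonneg α hα0 A _)
      nlinarith
    rw [h0, sub_zero]
    have e2 : h (0+1) = (Set.indicator A (fun _ => (1:ℝ)) 0
        - ∑' n : ℕ, Set.indicator A (poissonPmf α) n) / α := by
      rw [e1]; norm_num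
    rw [e2]
    refine le_trans ?_ hGb
    refine (div_le_div_iff_of_pos_right hα).2 ?_
    nlinarith [hcge, ind_le_one A 0, ind_nonneg A 0,
      mul_nonneg (sub_nonneg.2 (ind_le_one A 0)) (sub_nonneg.2 hE'le1)]
  · -- i = j+1
    have hjr : (0:ℝ) < (j:ℝ) + 1 := by positivity
    have hfact0 : ((j.factorial : ℝ)) ≠ 0 := Nat.cast_ne_zero.2 j.factorial_ne_zero
    have hfact1 : (((j+1).factorial : ℝ)) ≠ 0 := Nat.cast_ne_zero.2 (j+1).factorial_ne_zero
    have hfs : (((j+1).factorial : ℝ)) = ((j:ℝ)+1) * j.factorial := by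
      rw [Nat.factorial_succ]; push_cast; ring
    set c := ∑' n : ℕ, Set.indicator A (poissonPmf α) n with hcd
    set P0 := Ppart α j with hP0d
    set P1 := Ppart α (j+1) with hP1d
    set Q0 := Qt α j with hQ0d
    set Q1 := Qt α (j+1) with hQ1d
    set T0 := Tpart α A j with hT0d
    set u0 : ℝ := (j.factorial : ℝ) / α ^ (j+1) with hu0d
    set u1 : ℝ := ((j+1).factorial : ℝ) / α ^ (j+1+1) with hu1d
    set aa : ℝ := gfun α A (j+1) with haad
    set amax : ℝ := α ^ (j+1) / ((j+1).factorial : ℝ) with hamaxd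
    set R : ℝ := ∑' k : ℕ, gfun α A (k + (j+1+1)) with hRd
    -- the increment equation
    have eh0 : h (j+1) = u0 * (T0 - c * P0) := by
      rw [hfe j, hu0d, mul_div_right_comm]
    have eh1 : h (j+1+1) = u1 * ((T0 + aa) - c * P1) := by
      have hT1 : Tpart α A (j+1) = T0 + aa := by
        rw [Tpart_eq, Finset.sum_range_succ, hT0d, Tpart_eq, haad]
      rw [hfe (j+1), hT1, hu1d, mul_div_right_comm]
    have hcv : c = Real.exp (-α) * ((T0 + aa) + R) := by
      have := cval α hα0 A (j+1+1)
      rw [← hcd] at this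
      rw [this, hRd]
      congr 2
      rw [hT0d, Tpart_eq, haad, Finset.sum_range_succ]
    -- inequalities on u,P,Q
    have hβ : u0 * P0 ≤ u1 * P1 := by
      have l1 : u0 * P0 = (j.factorial * (α * P0)) / α ^ (j+1+1) := by
        rw [hu0d, pow_succ]
        field_simp
        ring
      have l2 : u1 * P1 = (j.factorial * (((j:ℝ)+1) * P1)) / α ^ (j+1+1) := by
        rw [hu1d, hfs]
        ring
      rw [l1, l2]
      refine div_le_div_of_nonneg_right ?_ (pow_pos hα _).le |>.trans_eq rfl
      exact mul_le_mul_of_nonneg_left (lemP' α hα0 j) (Nat.cast_nonneg _)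
    have hγ : u1 * Q1 ≤ u0 * Q0 := by
      have l1 : u0 * Q0 = (j.factorial * (α * Q0)) / α ^ (j+1+1) := by
        rw [hu0d, pow_succ]
        field_simp
        ring
      have l2 : u1 * Q1 = (j.factorial * (((j:ℝ)+1) * Q1)) / α ^ (j+1+1) := by
        rw [hu1d, hfs]
        ring
      rw [l1, l2]
      refine div_le_div_of_nonneg_right ?_ (pow_pos hα _).le |>.trans_eq rfl
      exact mul_le_mul_of_nonneg_left (lemQ α hα0 j) (Nat.cast_nonneg _)
    have hu0nn : 0 ≤ u0 := by rw [hu0d]; positivity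
    have hu1nn : 0 ≤ u1 := by rw [hu1d]; positivity
    have hM : 0 ≤ u1 * Q1 + u0 * P0 :=
      add_nonneg (mul_nonneg hu1nn (Qt_nonneg α hα0 _)) (mul_nonneg hu0nn (Ppart_nonneg α hα0 _))
    -- apply the master lemma
    have hmain : h (j+1+1) - h (j+1) ≤ Real.exp (-α) * (amax * (u1 * Q1 + u0 * P0)) := by
      refine master (Real.exp α) (Real.exp (-α)) c (h (j+1+1) - h (j+1)) T0 aa R P0 P1 Q0 Q1
        u0 u1 amax hEE ?_ ?_ (by rw [eh0, eh1]) hcv hβ hγ ?_ ?_ ?_ ?_ hM hE'pos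
      · rw [hP1d, hQ1d]; exact exp_split α (j+1)
      · rw [hP0d, hQ0d]; exact exp_split α j
      · rw [hT0d, Tpart_eq]
        exact Finset.sum_nonneg fun i _ => gfun_nonneg α hα0 A i
      · rw [hRd]; exact tsum_nonneg fun k => gfun_nonneg α hα0 A _
      · rw [haad]; exact gfun_nonneg α hα0 A _
      · rw [haad, hamaxd]; exact gfun_le α hα0 A _
    -- simplify the bound
    have key1 : amax * u1 = 1 / α := by
      rw [hamaxd, hu1d, pow_succ]
      field_simp
      ring
    have key2 : amax * u0 = 1 / ((j:ℝ)+1) := by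
      rw [hamaxd, hu0d, hfs]
      field_simp
    have hG : Real.exp (-α) * (amax * (u1 * Q1 + u0 * P0))
        = Real.exp (-α) * (Q1 / α + P0 / ((j:ℝ)+1)) := by
      have e1 : amax * (u1 * Q1 + u0 * P0) = Q1 / α + P0 / ((j:ℝ)+1) := by
        linear_combination Q1 * key1 + P0 * key2
      rw [e1]
    have hle2 : Real.exp (-α) * (Q1 / α + P0 / ((j:ℝ)+1)) ≤ (1 - Real.exp (-α)) / α := by
      have c2 : P0 / ((j:ℝ)+1) ≤ (P1 - 1) / α := by
        rw [div_le_div_iff₀ hjr hα]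
        have := lemP α hα0 j
        linarith
      have s1 : Real.exp (-α) * (Q1 / α + P0 / ((j:ℝ)+1))
          ≤ Real.exp (-α) * (Q1 / α + (P1 - 1) / α) :=
        mul_le_mul_of_nonneg_left (by linarith) hE'pos.le
      have h4 : Q1 + (P1 - 1) = Real.exp α - 1 := by
        have := exp_split α (j+1)
        rw [← hP1d, ← hQ1d] at this
        linarith
      have e3 : Real.exp (-α) * (Q1 / α + (P1 - 1) / α) = (1 - Real.exp (-α)) / α := by
        rw [← add_div, h4, ← mul_div_assoc]
        congr 1
        linear_combination hEE
      linarith [e3 ▸ s1]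
    calc h (j+1+1) - h (j+1) ≤ Real.exp (-α) * (amax * (u1 * Q1 + u0 * P0)) := hmain
      _ = Real.exp (-α) * (Q1 / α + P0 / ((j:ℝ)+1)) := hG
      _ ≤ (1 - Real.exp (-α)) / α := hle2
      _ ≤ min 1 (1/α) := hGb

lemma poisson_summable (α : ℝ) (hα : 0 ≤ α) : Summable (poissonPmf α) := by
  have he : poissonPmf α = fun n => Real.exp (-α) * (α ^ n / n.factorial) := by
    funext n; rw [poissonPmf]; ring
  rw [he]
  exact (Real.summable_pow_div_factorial α).mul_left _

lemma poisson_tsum (α : ℝ) : (∑' n : ℕ, poissonPmf α n) = 1 := by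
  have he : poissonPmf α = fun n => Real.exp (-α) * (α ^ n / n.factorial) := by
    funext n; rw [poissonPmf]; ring
  rw [he, tsum_mul_left, ← exp_tsum, ← Real.exp_add]
  simp

/-- Stein's method for Poisson approximation: the solution `h` (with `h 0 = 0`) of
the Stein equation `α h(i+1) - i h(i) = 1_A(i) - P(Z_α ∈ A)` satisfies
`|h(i+1) - h(i)| ≤ min 1 (1/α)` for all `i`. -/
theorem stein_solution_increment_bound (α : ℝ) (hα : 0 < α) (A : Set ℕ)
    (h : ℕ → ℝ) (h0 : h 0 = 0)
    (hstein : ∀ i : ℕ, α * h (i + 1) - i * h i =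
      Set.indicator A (fun _ => (1 : ℝ)) i - ∑' n : ℕ, Set.indicator A (poissonPmf α) n) :
    ∀ i : ℕ, |h (i + 1) - h i| ≤ min 1 (1 / α) := by
  intro i
  have h1 := stein_one_sided α hα A h h0 hstein i
  -- complement Stein equation for -h
  have hcsum : (∑' n : ℕ, Set.indicator Aᶜ (poissonPmf α) n)
      = 1 - ∑' n : ℕ, Set.indicator A (poissonPmf α) n := by
    have hpt : ∀ n, Set.indicator Aᶜ (poissonPmf α) n
        = poissonPmf α n - Set.indicator A (poissonPmf α) n := by
      intro n
      by_cases hn : n ∈ A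
      · simp [Set.indicator_of_mem hn, Set.indicator_of_notMem (by simpa using hn : n ∉ Aᶜ)]
      · simp [Set.indicator_of_notMem hn, Set.indicator_of_mem (by simpa using hn : n ∈ Aᶜ)]
    rw [tsum_congr hpt, Summable.tsum_sub (poisson_summable α hα.le)
      ((poisson_summable α hα.le).indicator A), poisson_tsum]
  have hcomp : ∀ k : ℕ, α * (-h (k + 1)) - k * (-h k) =
      Set.indicator Aᶜ (fun _ => (1 : ℝ)) k - ∑' n : ℕ, Set.indicator Aᶜ (poissonPmf α) n := by
    intro k
    have hik : Set.indicator Aᶜ (fun _ => (1 : ℝ)) k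
        = 1 - Set.indicator A (fun _ => (1 : ℝ)) k := by
      by_cases hk : k ∈ A
      · simp [Set.indicator_of_mem hk, Set.indicator_of_notMem (by simpa using hk : k ∉ Aᶜ)]
      · simp [Set.indicator_of_notMem hk, Set.indicator_of_mem (by simpa using hk : k ∈ Aᶜ)]
    rw [hik, hcsum]
    linarith [hstein k]
  have h2 := stein_one_sided α hα Aᶜ (fun n => -h n) (by simp [h0]) hcomp i
  rw [abs_le]
  constructor
  · have hmin : -min 1 (1/α) ≤ -(-h (i+1) - -h i) := by linarith
    linarith
  · exact h1
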